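/- Let β > 0. Then for every x > 0 and every integer k ≥ 2 the inequality (−1)^k ψ^{(k−1)}(x + β) ≥ (k−2)!/x^{k−1} − β·(k−1)!/x^k holds. -/

import Mathlib

open Real

namespace PGAux

open Real Filter Finset Set Topology


noncomputable def L : ℝ → ℝ := fun y => Real.log (Real.Gamma y)

noncomputable def F : ℕ → ℕ → ℝ → ℝ
  | 0 => fun n y => Real.BohrMollerup.logGammaSeq y n
  | 1 => fun n y => Real.log n - ∑ m ∈ Finset.range (n + 1), (y + m)⁻¹
  | (j+2) => fun n y =>
      (-1 : ℝ) ^ j * (j+1).factorial * ∑ m ∈ Finset.range (n + 1), ((y + m) ^ (j + 2))⁻¹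

noncomputable def G : ℕ → ℝ → ℝ
  | 0 => L
  | 1 => fun y => -Real.eulerMascheroniConstant + -y⁻¹
      + ∑' m : ℕ, (((m : ℝ) + 1)⁻¹ - (y + ((m : ℝ) + 1))⁻¹)
  | (j+2) => fun y => (-1 : ℝ) ^ j * (j+1).factorial * ∑' m : ℕ, ((y + m) ^ (j + 2))⁻¹

-- Bernoulli-type inequality
lemma bern (m : ℕ) {x β : ℝ} (hx : 0 < x) (hβ : 0 < β) :
    (x ^ m)⁻¹ - m * β * (x ^ (m+1))⁻¹ ≤ ((x + β) ^ m)⁻¹ := by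
  have hxβ : 0 < x + β := by linarith
  set u : ℝ := β / (x + β) with hu
  have hu1 : u ≤ 1 := by
    rw [hu, div_le_one hxβ]; linarith
  have h1 : 1 + (m : ℝ) * (-u) ≤ (1 + (-u)) ^ m := one_add_mul_le_pow (by linarith) m
  have h2 : (1 : ℝ) + (-u) = x / (x + β) := by rw [hu]; field_simp; ring
  have h3 : u ≤ β / x := by
    rw [hu]; gcongr; linarith
  have hP : 1 - (m : ℝ) * (β / x) ≤ x ^ m / (x + β) ^ m := by
    calc 1 - (m : ℝ) * (β / x) ≤ 1 + (m : ℝ) * (-u) := by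
          have : (m : ℝ) * u ≤ (m : ℝ) * (β / x) := by
            apply mul_le_mul_of_nonneg_left h3 (by positivity)
          linarith
      _ ≤ (1 + (-u)) ^ m := h1
      _ = x ^ m / (x + β) ^ m := by rw [h2, div_pow]
  calc (x ^ m)⁻¹ - (m : ℝ) * β * (x ^ (m+1))⁻¹
      = (1 - (m : ℝ) * (β / x)) / x ^ m := by
        rw [pow_succ]; field_simp
    _ ≤ (x ^ m / (x + β) ^ m) / x ^ m := by gcongr
    _ = ((x + β) ^ m)⁻¹ := by
        rw [div_div, mul_comm, ← div_div, div_self (by positivity : (x:ℝ) ^ m ≠ 0), one_div]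

lemma summable_aux {a : ℝ} (ha : 0 < a) {k : ℕ} (hk : 2 ≤ k) :
    Summable (fun m : ℕ => ((a + m) ^ k)⁻¹) := by
  have base : Summable (fun m : ℕ => ((a + m) ^ 2)⁻¹) := by
    rw [← summable_nat_add_iff 1]
    have hs : Summable (fun m : ℕ => (((m : ℝ) + 1) ^ 2)⁻¹) := by
      have := (summable_nat_add_iff (f := fun n : ℕ => ((n : ℝ) ^ 2)⁻¹) 1).mpr
        (Real.summable_nat_pow_inv.mpr one_lt_two)
      simpa using this
    refine Summable.of_nonneg_of_le (fun m => by positivity) (fun m => ?_) hs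
    have h1 : (0:ℝ) < (m:ℝ) + 1 := by positivity
    apply inv_anti₀ (by positivity)
    apply pow_le_pow_left₀ h1.le
    push_cast; linarith
  obtain ⟨j, rfl⟩ : ∃ j, k = j + 2 := ⟨k - 2, by omega⟩
  refine Summable.of_nonneg_of_le (fun m => by positivity) (fun m => ?_) (base.mul_left (a ^ j)⁻¹)
  have h1 : (0:ℝ) < a + m := by positivity
  rw [pow_add, mul_inv]
  apply mul_le_mul_of_nonneg_right ?_ (by positivity)
  apply inv_anti₀ (by positivity)
  apply pow_le_pow_left₀ ha.le
  exact le_add_of_nonneg_right (Nat.cast_nonneg m)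

lemma tsum_lb {k : ℕ} (hk : 1 ≤ k) {y : ℝ} (hy : 0 < y) :
    ((k : ℝ) * y ^ k)⁻¹ ≤ ∑' m : ℕ, ((y + m) ^ (k + 1))⁻¹ := by
  set c : ℕ → ℝ := fun m => ((k : ℝ) * (y + m) ^ k)⁻¹ with hc
  have hsum : Summable (fun m : ℕ => ((y + m) ^ (k + 1))⁻¹) := summable_aux hy (by omega)
  have hstep : ∀ m : ℕ, c m - c (m + 1) ≤ ((y + m) ^ (k + 1))⁻¹ := by
    intro m
    have hym : (0:ℝ) < y + m := by positivity
    have hb := bern k hym one_pos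
    -- ((y+m)^k)⁻¹ - k*1*((y+m)^(k+1))⁻¹ ≤ ((y+m+1)^k)⁻¹
    have hk0 : (0:ℝ) < (k:ℝ) := by exact_mod_cast hk
    have hcm : c m - c (m + 1)
        = (((y + m) ^ k)⁻¹ - ((y + m + 1) ^ k)⁻¹) / k := by
      rw [hc]
      push_cast
      rw [mul_inv, mul_inv]
      ring
    rw [hcm, div_le_iff₀ hk0]
    have := hb
    rw [mul_one] at this
    calc ((y + m) ^ k)⁻¹ - ((y + m + 1) ^ k)⁻¹
        ≤ (k : ℝ) * ((y + m) ^ (k+1))⁻¹ := by linarith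
      _ = ((y + m) ^ (k+1))⁻¹ * (k : ℝ) := by ring
  have htel : ∀ n : ℕ, c 0 - c n ≤ ∑' m : ℕ, ((y + m) ^ (k + 1))⁻¹ := by
    intro n
    have h1 : c 0 - c n = ∑ m ∈ Finset.range n, (c m - c (m + 1)) :=
      (Finset.sum_range_sub' c n).symm
    rw [h1]
    calc ∑ m ∈ Finset.range n, (c m - c (m + 1))
        ≤ ∑ m ∈ Finset.range n, ((y + m) ^ (k + 1))⁻¹ :=
          Finset.sum_le_sum (fun m _ => hstep m)
      _ ≤ ∑' m : ℕ, ((y + m) ^ (k + 1))⁻¹ :=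
          Summable.sum_le_tsum _ (fun m _ => by positivity) hsum
  have hc0 : Tendsto (fun n : ℕ => c 0 - c n) atTop (𝓝 (c 0 - 0)) := by
    refine Tendsto.sub tendsto_const_nhds ?_
    have h1 : Tendsto (fun n : ℕ => (k : ℝ) * (y + n) ^ k) atTop atTop := by
      apply Tendsto.const_mul_atTop (show (0:ℝ) < k by exact_mod_cast Nat.pos_of_ne_zero (by omega))
      have h2 : Tendsto (fun n : ℕ => y + (n:ℝ)) atTop atTop :=
        tendsto_atTop_add_const_left _ y tendsto_natCast_atTop_atTop
      exact (tendsto_pow_atTop (n := k) (by omega)).comp h2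
    exact h1.inv_tendsto_atTop
  have := le_of_tendsto hc0 (Eventually.of_forall htel)
  simp only [sub_zero] at this
  simpa [hc] using this

section UnifHelpers

variable {s : Set ℝ} {Fn Gn : ℕ → ℝ → ℝ} {f g : ℝ → ℝ}

lemma tuo_const {c : ℕ → ℝ} {c₀ : ℝ} (h : Tendsto c atTop (𝓝 c₀)) :
    TendstoUniformlyOn (fun n (_ : ℝ) => c n) (fun _ => c₀) atTop s := by
  rw [Metric.tendstoUniformlyOn_iff]
  intro ε hε
  filter_upwards [Metric.tendsto_nhds.mp h ε hε] with n hn x _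
  simpa [dist_comm] using hn

lemma tuo_fixed : TendstoUniformlyOn (fun (_ : ℕ) (y : ℝ) => f y) f atTop s := by
  rw [Metric.tendstoUniformlyOn_iff]
  intro ε hε
  filter_upwards with n x _
  simpa using hε

lemma tuo_add (hf : TendstoUniformlyOn Fn f atTop s) (hg : TendstoUniformlyOn Gn g atTop s) :
    TendstoUniformlyOn (fun n y => Fn n y + Gn n y) (fun y => f y + g y) atTop s := by
  rw [Metric.tendstoUniformlyOn_iff] at *
  intro ε hε
  filter_upwards [hf (ε/2) (by linarith), hg (ε/2) (by linarith)] with n hn1 hn2 x hx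
  have h1 := hn1 x hx
  have h2 := hn2 x hx
  rw [Real.dist_eq] at *
  calc |f x + g x - (Fn n x + Gn n x)| = |(f x - Fn n x) + (g x - Gn n x)| := by ring_nf
    _ ≤ |f x - Fn n x| + |g x - Gn n x| := abs_add_le _ _
    _ < ε := by linarith

lemma tuo_shift (h : TendstoUniformlyOn Fn f atTop s) :
    TendstoUniformlyOn (fun n => Fn (n + 1)) f atTop s := by
  rw [Metric.tendstoUniformlyOn_iff] at *
  intro ε hε
  exact (tendsto_add_atTop_nat 1).eventually (h ε hε)

lemma tuo_const_mul (c : ℝ) (h : TendstoUniformlyOn Fn f atTop s) :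
    TendstoUniformlyOn (fun n y => c * Fn n y) (fun y => c * f y) atTop s := by
  rw [Metric.tendstoUniformlyOn_iff] at *
  intro ε hε
  have hpos : 0 < ε / (|c| + 1) := by positivity
  filter_upwards [h _ hpos] with n hn x hx
  have h1 := hn x hx
  rw [Real.dist_eq] at *
  have hc : (0:ℝ) ≤ |c| := abs_nonneg c
  calc |c * f x - c * Fn n x| = |c| * |f x - Fn n x| := by rw [← abs_mul]; ring_nf
    _ ≤ |c| * (ε / (|c| + 1)) := mul_le_mul_of_nonneg_left h1.le hc
    _ < ε := by rw [mul_div_assoc']; rw [div_lt_iff₀ (by positivity)]; nlinarith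

lemma tlu_of_Icc (h : ∀ a b : ℝ, 0 < a → TendstoUniformlyOn Fn f atTop (Icc a b)) :
    TendstoLocallyUniformlyOn Fn f atTop (Ioi 0) := by
  rw [tendstoLocallyUniformlyOn_iff_forall_isCompact isOpen_Ioi]
  intro K hKs hK
  rcases K.eq_empty_or_nonempty with rfl | hne
  · exact tendstoUniformlyOn_empty
  obtain ⟨a, haK, ha⟩ := hK.exists_isLeast hne
  obtain ⟨b, hbK, hb⟩ := hK.exists_isGreatest hne
  exact (h a b (hKs haK)).mono (fun z hz => ⟨ha hz, hb hz⟩)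

end UnifHelpers

lemma tlu_F2 (j : ℕ) :
    TendstoLocallyUniformlyOn (fun n => F (j+2) n) (G (j+2)) atTop (Ioi 0) := by
  apply tlu_of_Icc
  intro a b ha
  have base : TendstoUniformlyOn
      (fun n (y : ℝ) => ∑ m ∈ Finset.range n, ((y + m) ^ (j+2))⁻¹)
      (fun y => ∑' m : ℕ, ((y + m) ^ (j+2))⁻¹) atTop (Icc a b) := by
    apply tendstoUniformlyOn_tsum_nat (u := fun m : ℕ => ((a + (m:ℝ)) ^ (j+2))⁻¹)
      (summable_aux ha (by omega))
    intro m y hy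
    have h1 : (0:ℝ) < a + m := by positivity
    have h2 : (0:ℝ) < y + m := by
      have := hy.1
      have hm : (0:ℝ) ≤ (m:ℝ) := Nat.cast_nonneg m
      linarith
    rw [Real.norm_eq_abs, abs_of_nonneg (by positivity)]
    apply inv_anti₀ (by positivity)
    exact pow_le_pow_left₀ h1.le (by linarith [hy.1]) _
  have := tuo_const_mul ((-1 : ℝ) ^ j * (j+1).factorial) (tuo_shift base)
  exact this.congr (Eventually.of_forall (fun n y _ => rfl))

lemma harmonic_cast (n : ℕ) :
    ((harmonic n : ℚ) : ℝ) = ∑ m ∈ Finset.range n, ((m : ℝ) + 1)⁻¹ := by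
  rw [harmonic]
  push_cast
  rfl

lemma F1_eq (n : ℕ) {y : ℝ} (hy : 0 < y) :
    F 1 n y = (Real.log n - (harmonic n : ℚ)) + -y⁻¹
      + ∑ m ∈ Finset.range n, (((m : ℝ) + 1)⁻¹ - (y + ((m : ℝ) + 1))⁻¹) := by
  show Real.log n - ∑ m ∈ Finset.range (n + 1), (y + m)⁻¹ = _
  rw [Finset.sum_range_succ' (fun m : ℕ => (y + (m:ℝ))⁻¹) n]
  rw [Finset.sum_sub_distrib, harmonic_cast]
  push_cast
  ring

lemma tlu_F1 : TendstoLocallyUniformlyOn (fun n => F 1 n) (G 1) atTop (Ioi 0) := by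
  apply tlu_of_Icc
  intro a b ha
  have h1 : TendstoUniformlyOn (fun (n : ℕ) (_ : ℝ) => Real.log n - ((harmonic n : ℚ) : ℝ))
      (fun _ => -Real.eulerMascheroniConstant) atTop (Icc a b) := by
    apply tuo_const
    have := Real.tendsto_harmonic_sub_log.neg
    simpa [neg_sub] using this
  have h2 : TendstoUniformlyOn (fun (_ : ℕ) (y : ℝ) => -y⁻¹) (fun y : ℝ => -y⁻¹)
      atTop (Icc a b) := tuo_fixed
  have h3 : TendstoUniformlyOn
      (fun n (y : ℝ) => ∑ m ∈ Finset.range n, (((m : ℝ) + 1)⁻¹ - (y + ((m : ℝ) + 1))⁻¹))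
      (fun y => ∑' m : ℕ, (((m : ℝ) + 1)⁻¹ - (y + ((m : ℝ) + 1))⁻¹)) atTop (Icc a b) := by
    have hu : Summable (fun m : ℕ => b * (((m : ℝ) + 1) ^ 2)⁻¹) := by
      apply Summable.mul_left
      have := (summable_nat_add_iff (f := fun n : ℕ => ((n : ℝ) ^ 2)⁻¹) 1).mpr
        (Real.summable_nat_pow_inv.mpr one_lt_two)
      simpa using this
    apply tendstoUniformlyOn_tsum_nat hu
    intro m y hy
    have hy0 : 0 < y := lt_of_lt_of_le ha hy.1
    have hm1 : (0:ℝ) < (m:ℝ) + 1 := by positivity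
    have hym : (0:ℝ) < y + ((m:ℝ) + 1) := by positivity
    have hterm : ((m : ℝ) + 1)⁻¹ - (y + ((m : ℝ) + 1))⁻¹
        = y * (((m:ℝ) + 1) * (y + ((m:ℝ) + 1)))⁻¹ := by
      field_simp
      ring
    rw [Real.norm_eq_abs, hterm, abs_of_nonneg (by positivity)]
    apply mul_le_mul hy.2 ?_ (by positivity) (le_trans hy0.le hy.2)
    apply inv_anti₀ (by positivity)
    rw [sq]
    apply mul_le_mul_of_nonneg_left (by linarith) hm1.le
  have := (tuo_add (tuo_add h1 h2) h3).congr
    (Eventually.of_forall (fun n y hy => (F1_eq n (lt_of_lt_of_le ha hy.1)).symm))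
  exact this

lemma hasDerivAt_inv_pow (p : ℕ) (m : ℕ) {y : ℝ} (hy : 0 < y) :
    HasDerivAt (fun y : ℝ => ((y + m) ^ (p+1))⁻¹)
      (-((p:ℝ)+1) * ((y + m) ^ (p+2))⁻¹) y := by
  have hym : (0:ℝ) < y + m := by positivity
  have hp : HasDerivAt (fun y : ℝ => (y + m) ^ (p+1))
      (((p:ℝ)+1) * (y + m) ^ p) y := by
    have := ((hasDerivAt_id y).add_const (m:ℝ)).pow (p+1)
    refine this.congr_deriv ?_
    simp
  have := hp.inv (by positivity)
  refine this.congr_deriv ?_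
  have hpow : ((y + (m:ℝ)) ^ (p+1)) ^ 2 = (y + m) ^ p * (y + m) ^ (p+2) := by
    rw [← pow_mul, ← pow_add]
    congr 1
    ring
  rw [hpow]
  field_simp

lemma hasDerivAt_F (k n : ℕ) {y : ℝ} (hy : 0 < y) :
    HasDerivAt (F k n) (F (k+1) n y) y := by
  have hym : ∀ m : ℕ, (0:ℝ) < y + m := fun m => by positivity
  match k with
  | 0 =>
    have h1 : HasDerivAt (fun y : ℝ => y * Real.log n + Real.log (n.factorial))
        (Real.log n) y := by
      simpa using ((hasDerivAt_id y).mul_const (Real.log n)).add_const (Real.log n.factorial)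
    have h2 : HasDerivAt (fun y : ℝ => ∑ m ∈ Finset.range (n+1), Real.log (y + m))
        (∑ m ∈ Finset.range (n+1), (y + m)⁻¹) y := by
      apply HasDerivAt.fun_sum
      intro m _
      have := ((hasDerivAt_id y).add_const (m:ℝ)).log (hym m).ne'
      simpa using this
    have := h1.sub h2
    exact this
  | 1 =>
    have h2 : HasDerivAt (fun y : ℝ => ∑ m ∈ Finset.range (n+1), (y + m)⁻¹)
        (∑ m ∈ Finset.range (n+1), (-1 * ((y + m) ^ 2)⁻¹)) y := by
      apply HasDerivAt.fun_sum
      intro m _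
      have := hasDerivAt_inv_pow 0 m hy
      simpa using this
    have := (hasDerivAt_const y (Real.log n)).sub h2
    refine this.congr_deriv ?_
    symm
    show (-1:ℝ) ^ 0 * ((0+1).factorial : ℝ) * ∑ m ∈ Finset.range (n+1), ((y + m) ^ (0+2))⁻¹ = _
    simp [Finset.mul_sum]
  | (j+2) =>
    have h2 : HasDerivAt (fun y : ℝ => ∑ m ∈ Finset.range (n+1), ((y + m) ^ (j+2))⁻¹)
        (∑ m ∈ Finset.range (n+1), (-((j:ℝ)+2) * ((y + m) ^ (j+3))⁻¹)) y := by
      apply HasDerivAt.fun_sum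
      intro m _
      have := hasDerivAt_inv_pow (j+1) m hy
      refine this.congr_deriv ?_
      push_cast; ring
    have := h2.const_mul ((-1:ℝ) ^ j * ((j+1).factorial : ℝ))
    refine this.congr_deriv ?_
    symm
    show (-1:ℝ) ^ (j+1) * ((j+2).factorial : ℝ) * ∑ m ∈ Finset.range (n+1), ((y + m) ^ (j+3))⁻¹ = _
    rw [Finset.mul_sum, Finset.mul_sum]
    apply Finset.sum_congr rfl
    intro m _
    rw [Nat.factorial_succ (j+1)]
    push_cast
    ring

lemma tlu_succ (k : ℕ) :
    TendstoLocallyUniformlyOn (fun n => F (k+1) n) (G (k+1)) atTop (Ioi 0) := by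
  match k with
  | 0 => exact tlu_F1
  | (j+1) => exact tlu_F2 j

lemma tendsto_F (k : ℕ) {y : ℝ} (hy : 0 < y) :
    Tendsto (fun n => F k n y) atTop (𝓝 (G k y)) := by
  match k with
  | 0 => exact Real.BohrMollerup.tendsto_log_gamma hy
  | (j+1) => exact (tlu_succ j).tendsto_at hy

lemma key (k : ℕ) : ∀ y ∈ Ioi (0:ℝ), deriv^[k] L y = G k y := by
  induction k with
  | zero => intro y _; rfl
  | succ k ih =>
    intro y hy
    have hG : HasDerivAt (G k) (G (k+1) y) y :=
      hasDerivAt_of_tendstoLocallyUniformlyOn isOpen_Ioi (tlu_succ k)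
        (Eventually.of_forall (fun n z hz => hasDerivAt_F k n hz))
        (fun z hz => tendsto_F k hz) hy
    rw [Function.iterate_succ_apply']
    have heq : deriv^[k] L =ᶠ[𝓝 y] G k := by
      filter_upwards [isOpen_Ioi.mem_nhds hy] with z hz using ih z hz
    rw [heq.deriv_eq]
    exact hG.deriv

end PGAux

/-- The polygamma function `ψ^{(k)}`: the `k`-th derivative of the digamma function,
i.e. the `(k+1)`-st derivative of `ln ∘ Γ`. -/
noncomputable def polygamma (k : ℕ) : ℝ → ℝ :=
  iteratedDeriv (k + 1) (fun x : ℝ => Real.log (Real.Gamma x))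

theorem stmt_5 (β : ℝ) (hβ : 0 < β) (x : ℝ) (hx : 0 < x) (k : ℕ) (hk : 2 ≤ k) :
    (Nat.factorial (k - 2) : ℝ) / x ^ (k - 1) - β * (Nat.factorial (k - 1) : ℝ) / x ^ k
      ≤ (-1 : ℝ) ^ k * polygamma (k - 1) (x + β) := by
  obtain ⟨j, rfl⟩ : ∃ j, k = j + 2 := ⟨k - 2, by omega⟩
  have hy : 0 < x + β := by linarith
  have hmain : polygamma (j + 2 - 1) (x + β)
      = (-1 : ℝ) ^ j * ((j+1).factorial : ℝ) * ∑' m : ℕ, ((x + β + m) ^ (j + 2))⁻¹ := by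
    show iteratedDeriv (j + 2) (fun x : ℝ => Real.log (Real.Gamma x)) (x + β) = _
    rw [iteratedDeriv_eq_iterate]
    exact PGAux.key (j+2) (x+β) hy
  rw [hmain]
  have hsign : (-1:ℝ) ^ (j+2) * ((-1:ℝ) ^ j * ((j+1).factorial : ℝ)
      * ∑' m : ℕ, ((x + β + m) ^ (j + 2))⁻¹)
      = ((j+1).factorial : ℝ) * ∑' m : ℕ, ((x + β + m) ^ (j + 2))⁻¹ := by
    rw [← mul_assoc, ← mul_assoc, ← pow_add]
    have : (-1:ℝ) ^ (j + 2 + j) = 1 := by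
      apply Even.neg_one_pow
      exact ⟨j + 1, by ring⟩
    rw [this, one_mul]
  rw [hsign]
  have hlb : (((j:ℝ)+1) * (x + β) ^ (j+1))⁻¹ ≤ ∑' m : ℕ, ((x + β + m) ^ (j + 2))⁻¹ := by
    have := PGAux.tsum_lb (k := j+1) (by omega) hy
    simpa [add_assoc] using this
  have hfact : ((j+1).factorial : ℝ) = ((j:ℝ)+1) * (j.factorial : ℝ) := by
    rw [Nat.factorial_succ]; push_cast; ring
  calc (((j+2) - 2).factorial : ℝ) / x ^ ((j+2) - 1) - β * (((j+2) - 1).factorial : ℝ) / x ^ (j+2)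
      = (j.factorial : ℝ) * ((x ^ (j+1))⁻¹ - ((j:ℝ)+1) * β * (x ^ (j+2))⁻¹) := by
        show (j.factorial : ℝ) / x ^ (j+1) - β * ((j+1).factorial : ℝ) / x ^ (j+2) = _
        rw [hfact]
        field_simp
    _ ≤ (j.factorial : ℝ) * ((x + β) ^ (j+1))⁻¹ := by
        apply mul_le_mul_of_nonneg_left ?_ (by positivity)
        have := PGAux.bern (j+1) hx hβ
        calc (x ^ (j+1))⁻¹ - ((j:ℝ)+1) * β * (x ^ (j+2))⁻¹
            = (x ^ (j+1))⁻¹ - ((j+1:ℕ):ℝ) * β * (x ^ ((j+1)+1))⁻¹ := by push_cast; ring_nf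
          _ ≤ ((x + β) ^ (j+1))⁻¹ := this
    _ = ((j+1).factorial : ℝ) * ((((j:ℝ)+1) * (x + β) ^ (j+1))⁻¹) := by
        rw [hfact, mul_inv]
        have hj1 : ((j:ℝ)+1) ≠ 0 := by positivity
        field_simp
    _ ≤ ((j+1).factorial : ℝ) * ∑' m : ℕ, ((x + β + m) ^ (j + 2))⁻¹ := by
        apply mul_le_mul_of_nonneg_left hlb (by positivity)
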